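/- Let (B, Θ) be a category with a structure of nullhomotopies satisfying the reduced interchange condition, with a Θ-strong zero object, strong Θ-kernels of all arrows, strong Θ-cokernels of all terminal arrows, and pullbacks. Let S be a class of arrows of B closed under composition, stable under pullbacks, containing all identities, and satisfying left cancellation (if f·g ∈ S then g ∈ S). If, for an arrow g : X → Y with Θ-kernel (N(g), n_g, ν_g), the objects Y and N(g) are S-proper and X is S-global, then the snail sequence N(0_{N(g)}) → N(0_X) → N(0_Y) → π₀(N(g)) → π₀(X) → π₀(Y) is S-exact at N(0_X), at N(0_Y), and at π₀(X). -/
import Mathlib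


open CategoryTheory CategoryTheory.Limits

noncomputable section

universe v u

/-- A structure of nullhomotopies `Θ` on a category `B` (Grandis).  We encode the family of
sets `Θ(g)`, for `g : X ⟶ Y`, as a total space `H X Y` together with a projection `ar`
assigning to every nullhomotopy the arrow on which it lives; thus `Θ(g) = {φ : H X Y // ar φ = g}`.
The maps `f ∘ - ∘ h : Θ(g) → Θ(f·g·h)` are encoded by `act`. -/
structure NullStruct (B : Type u) [Category.{v} B] where
  H : B → B → Type v
  ar : ∀ {X Y : B}, H X Y → (X ⟶ Y)
  act : ∀ {A X Y D : B}, (A ⟶ X) → H X Y → (Y ⟶ D) → H A D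
  ar_act : ∀ {A X Y D : B} (f : A ⟶ X) (φ : H X Y) (h : Y ⟶ D),
      ar (act f φ h) = f ≫ ar φ ≫ h
  act_id : ∀ {X Y : B} (φ : H X Y), act (𝟙 X) φ (𝟙 Y) = φ
  act_comp : ∀ {A' A X Y D D' : B} (f' : A' ⟶ A) (f : A ⟶ X) (φ : H X Y)
      (h : Y ⟶ D) (h' : D ⟶ D'),
      act (f' ≫ f) φ (h ≫ h') = act f' (act f φ h) h'

namespace NullStruct

variable {B : Type u} [Category.{v} B]

/-- The reduced interchange condition: `α ∘ g = f ∘ β` for `α ∈ Θ(f)`, `β ∈ Θ(g)`. -/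
def ReducedInterchange (Θ : NullStruct B) : Prop :=
  ∀ {A X Y : B} (f : A ⟶ X) (g : X ⟶ Y) (α : Θ.H A X) (β : Θ.H X Y),
    Θ.ar α = f → Θ.ar β = g → Θ.act (𝟙 A) α g = Θ.act f β (𝟙 Y)

/-- `(N, n, ν)` is a Θ-kernel of `g`. -/
structure IsKer (Θ : NullStruct B) {N X Y : B} (g : X ⟶ Y) (n : N ⟶ X) (ν : Θ.H N Y) : Prop where
  ar_eq : Θ.ar ν = n ≫ g
  lift : ∀ {A : B} (f : A ⟶ X) (φ : Θ.H A Y), Θ.ar φ = f ≫ g →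
    ∃! f' : A ⟶ N, f' ≫ n = f ∧ Θ.act f' ν (𝟙 Y) = φ

/-- `(N, n, ν)` is a strong Θ-kernel of `g`. -/
structure IsStrongKer (Θ : NullStruct B) {N X Y : B} (g : X ⟶ Y) (n : N ⟶ X) (ν : Θ.H N Y)
    extends NullStruct.IsKer Θ g n ν : Prop where
  liftH : ∀ {A : B} (f : A ⟶ N) (φ : Θ.H A X), Θ.ar φ = f ≫ n →
    Θ.act (𝟙 A) φ g = Θ.act f ν (𝟙 Y) →
    ∃! φ' : Θ.H A N, Θ.ar φ' = f ∧ Θ.act (𝟙 A) φ' n = φ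

/-- `(Q, c, γ)` is a Θ-cokernel of `g`. -/
structure IsCoker (Θ : NullStruct B) {X Y Q : B} (g : X ⟶ Y) (c : Y ⟶ Q) (γ : Θ.H X Q) : Prop where
  ar_eq : Θ.ar γ = g ≫ c
  desc : ∀ {D : B} (f : Y ⟶ D) (φ : Θ.H X D), Θ.ar φ = g ≫ f →
    ∃! f' : Q ⟶ D, c ≫ f' = f ∧ Θ.act (𝟙 X) γ f' = φ

/-- `(Q, c, γ)` is a strong Θ-cokernel of `g`. -/
structure IsStrongCoker (Θ : NullStruct B) {X Y Q : B} (g : X ⟶ Y) (c : Y ⟶ Q) (γ : Θ.H X Q)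
    extends NullStruct.IsCoker Θ g c γ : Prop where
  descH : ∀ {D : B} (f : Q ⟶ D) (φ : Θ.H Y D), Θ.ar φ = c ≫ f →
    Θ.act g φ (𝟙 D) = Θ.act (𝟙 X) γ f →
    ∃! φ' : Θ.H Q D, Θ.ar φ' = f ∧ Θ.act c φ' (𝟙 D) = φ

/-- A Θ-strong zero object: a zero object `Z` such that, for every `X`, the sets of
nullhomotopies `Θ(X ⟶ Z)` and `Θ(Z ⟶ X)` are singletons. -/
structure StrongZero (Θ : NullStruct B) where
  Z : B
  isZero : IsZero Z
  toZ : ∀ X : B, Θ.H X Z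
  toZ_uniq : ∀ (X : B) (φ : Θ.H X Z), φ = toZ X
  fromZ : ∀ X : B, Θ.H Z X
  fromZ_uniq : ∀ (X : B) (φ : Θ.H Z X), φ = fromZ X

/-- The zero arrow `X ⟶ Z ⟶ Y` through the Θ-strong zero object. -/
def StrongZero.zero {Θ : NullStruct B} (ζ : Θ.StrongZero) (X Y : B) : X ⟶ Y :=
  ζ.isZero.from_ X ≫ ζ.isZero.to_ Y

/-- The canonical nullhomotopy `*` on the zero arrow `X ⟶ Z ⟶ Y`. -/
def StrongZero.star {Θ : NullStruct B} (ζ : Θ.StrongZero) (X Y : B) : Θ.H X Y :=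
  Θ.act (𝟙 X) (ζ.toZ X) (ζ.isZero.to_ Y)

/-- An object `Y` is discrete: every nullhomotopy with codomain `Y` lives on the zero arrow
and is the canonical one (i.e. `Θ(g) = ∅` if `g ≠ 0`, and `Θ(0) = {*}`). -/
def IsDiscrete {Θ : NullStruct B} (ζ : Θ.StrongZero) (Y : B) : Prop :=
  ∀ (X : B) (φ : Θ.H X Y), Θ.ar φ = ζ.zero X Y ∧ φ = ζ.star X Y

/-- Codiscrete objects: dual of discrete. -/
def IsCodiscrete {Θ : NullStruct B} (ζ : Θ.StrongZero) (X : B) : Prop :=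
  ∀ (Y : B) (φ : Θ.H X Y), Θ.ar φ = ζ.zero X Y ∧ φ = ζ.star X Y

/-- `k` is a categorical kernel of `g` (with respect to the zero arrows through the
Θ-strong zero object). -/
def IsCatKer {Θ : NullStruct B} (ζ : Θ.StrongZero) {K X Y : B} (k : K ⟶ X) (g : X ⟶ Y) : Prop :=
  k ≫ g = ζ.zero K Y ∧
  ∀ {W : B} (w : W ⟶ X), w ≫ g = ζ.zero W Y → ∃! w' : W ⟶ K, w' ≫ k = w

/-- `(f, φ, g)` is S-exact: any factorization of `(f, φ)` through a Θ-kernel of `g`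
belongs to `S`. -/
def SExact (Θ : NullStruct B) (S : ∀ ⦃X Y : B⦄, (X ⟶ Y) → Prop)
    {W X Y : B} (f : W ⟶ X) (φ : Θ.H W Y) (g : X ⟶ Y) : Prop :=
  ∀ {N : B} (n : N ⟶ X) (ν : Θ.H N Y), Θ.IsKer g n ν →
    ∀ (w : W ⟶ N), w ≫ n = f → Θ.act w ν (𝟙 Y) = φ → S w

/-- `Y` is S-proper relative to the canonical arrow `η : Y ⟶ π₀(Y)`: the canonical
comparison `N(id_Y) ⟶ N(η_Y)` belongs to `S`. -/
def SProper (Θ : NullStruct B) (S : ∀ ⦃X Y : B⦄, (X ⟶ Y) → Prop)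
    {Y P : B} (η : Y ⟶ P) : Prop :=
  ∀ {NI : B} (nI : NI ⟶ Y) (νI : Θ.H NI Y), Θ.IsKer (𝟙 Y) nI νI →
  ∀ {NE : B} (nE : NE ⟶ Y) (νE : Θ.H NE P), Θ.IsKer η nE νE →
  ∀ (w : NI ⟶ NE), w ≫ nE = nI → Θ.act w νE (𝟙 P) = Θ.act (𝟙 NI) νI η → S w

/-- Condition (Sub) on a class `S` of arrows. -/
def CondSub {Θ : NullStruct B} (ζ : Θ.StrongZero) (S : ∀ ⦃X Y : B⦄, (X ⟶ Y) → Prop) : Prop :=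
  ∀ ⦃X Y X₀ Y₀ : B⦄ (g : X ⟶ Y) (g₀ : X₀ ⟶ Y₀) (x : X ⟶ X₀) (y : Y ⟶ Y₀),
    g ≫ y = x ≫ g₀ →
    ∀ ⦃Kg Kg₀ Kx Ky : B⦄ (kg : Kg ⟶ X) (kg₀ : Kg₀ ⟶ X₀) (kx : Kx ⟶ X) (ky : Ky ⟶ Y),
      IsCatKer ζ kg g → IsCatKer ζ kg₀ g₀ → IsCatKer ζ kx x → IsCatKer ζ ky y →
      ∀ (u : Kg ⟶ Kg₀) (v : Kx ⟶ Ky),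
        u ≫ kg₀ = kg ≫ x → v ≫ ky = kx ≫ g → S g → S u → S v

end NullStruct

open NullStruct
section SnailAux

variable {B : Type u} [Category.{v} B] {Θ : NullStruct B}

lemma act_ll {A A' X Y : B} (f' : A ⟶ A') (f : A' ⟶ X) (φ : Θ.H X Y) :
    Θ.act f' (Θ.act f φ (𝟙 Y)) (𝟙 Y) = Θ.act (f' ≫ f) φ (𝟙 Y) := by
  have := Θ.act_comp f' f φ (𝟙 Y) (𝟙 Y)
  simpa using this.symm

lemma act_lr {A X Y D : B} (f : A ⟶ X) (φ : Θ.H X Y) (h : Y ⟶ D) :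
    Θ.act f (Θ.act (𝟙 X) φ h) (𝟙 D) = Θ.act f φ h := by
  have := Θ.act_comp f (𝟙 X) φ h (𝟙 D)
  simpa using this.symm

lemma act_rl {A X Y D : B} (f : A ⟶ X) (φ : Θ.H X Y) (h : Y ⟶ D) :
    Θ.act (𝟙 A) (Θ.act f φ (𝟙 Y)) h = Θ.act f φ h := by
  have := Θ.act_comp (𝟙 A) f φ (𝟙 Y) h
  simpa using this.symm

lemma act_rr {A X Y D D' : B} (f : A ⟶ X) (φ : Θ.H X Y) (h : Y ⟶ D) (h' : D ⟶ D') :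
    Θ.act (𝟙 A) (Θ.act f φ h) h' = Θ.act f φ (h ≫ h') := by
  have := Θ.act_comp (𝟙 A) f φ h h'
  simpa using this.symm

lemma zero_comp' (ζ : Θ.StrongZero) {A C D : B} (f : C ⟶ D) :
    ζ.zero A C ≫ f = ζ.zero A D := by
  show (ζ.isZero.from_ A ≫ ζ.isZero.to_ C) ≫ f = ζ.isZero.from_ A ≫ ζ.isZero.to_ D
  rw [Category.assoc]
  congr 1
  exact ζ.isZero.eq_of_src _ _

lemma comp_zero' (ζ : Θ.StrongZero) {A C D : B} (f : A ⟶ C) :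
    f ≫ ζ.zero C D = ζ.zero A D := by
  show f ≫ ζ.isZero.from_ C ≫ ζ.isZero.to_ D = ζ.isZero.from_ A ≫ ζ.isZero.to_ D
  rw [← Category.assoc]
  congr 1
  exact ζ.isZero.eq_of_tgt _ _

lemma ar_star (ζ : Θ.StrongZero) (A C : B) :
    Θ.ar (ζ.star A C) = ζ.zero A C := by
  show Θ.ar (Θ.act (𝟙 A) (ζ.toZ A) (ζ.isZero.to_ C)) = _
  rw [Θ.ar_act, Category.id_comp,
    show Θ.ar (ζ.toZ A) = ζ.isZero.from_ A from ζ.isZero.eq_of_tgt _ _]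
  rfl

lemma act_star (ζ : Θ.StrongZero) {A A' C : B} (f : A ⟶ A') :
    Θ.act f (ζ.star A' C) (𝟙 C) = ζ.star A C := by
  show Θ.act f (Θ.act (𝟙 A') (ζ.toZ A') (ζ.isZero.to_ C)) (𝟙 C)
      = Θ.act (𝟙 A) (ζ.toZ A) (ζ.isZero.to_ C)
  rw [act_lr, ← act_rl f (ζ.toZ A') (ζ.isZero.to_ C),
    ζ.toZ_uniq A (Θ.act f (ζ.toZ A') (𝟙 ζ.Z))]

lemma star_act (ζ : Θ.StrongZero) {A C D : B} (h : C ⟶ D) :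
    Θ.act (𝟙 A) (ζ.star A C) h = ζ.star A D := by
  show Θ.act (𝟙 A) (Θ.act (𝟙 A) (ζ.toZ A) (ζ.isZero.to_ C)) h
      = Θ.act (𝟙 A) (ζ.toZ A) (ζ.isZero.to_ D)
  rw [act_rr]
  congr 1
  exact ζ.isZero.eq_of_src _ _

lemma fromZ_act (ζ : Θ.StrongZero) {A C : B} (f : A ⟶ ζ.Z) (ξ : Θ.H ζ.Z C) :
    Θ.act f ξ (𝟙 C) = ζ.star A C := by
  have h1 : ξ = ζ.star ζ.Z C := (ζ.fromZ_uniq C ξ).trans (ζ.fromZ_uniq C _).symm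
  rw [h1, act_star]

lemma zero_act (ζ : Θ.StrongZero) {A C D : B} (β : Θ.H C D) :
    Θ.act (ζ.zero A C) β (𝟙 D) = ζ.star A D := by
  have h := Θ.act_comp (ζ.isZero.from_ A) (ζ.isZero.to_ C) β (𝟙 D) (𝟙 D)
  simp only [Category.comp_id] at h
  show Θ.act (ζ.isZero.from_ A ≫ ζ.isZero.to_ C) β (𝟙 D) = _
  rw [h, fromZ_act]

lemma ker_hom_ext {N X Y : B} {g : X ⟶ Y} {n : N ⟶ X} {ν : Θ.H N Y}
    (hk : Θ.IsKer g n ν) {A : B} (t t' : A ⟶ N)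
    (h1 : t ≫ n = t' ≫ n) (h2 : Θ.act t ν (𝟙 Y) = Θ.act t' ν (𝟙 Y)) : t = t' := by
  have har : Θ.ar (Θ.act t' ν (𝟙 Y)) = (t' ≫ n) ≫ g := by
    rw [Θ.ar_act, hk.ar_eq]
    simp
  obtain ⟨u, ⟨hu1, hu2⟩, huniq⟩ := hk.lift (t' ≫ n) (Θ.act t' ν (𝟙 Y)) har
  rw [huniq t ⟨h1, h2⟩, huniq t' ⟨rfl, rfl⟩]

/-- Discreteness of an object: every nullhomotopy into it is the canonical one over 0. -/
def SnailDisc (ζ : Θ.StrongZero) (D : B) : Prop :=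
  ∀ (A : B) (φ : Θ.H A D), Θ.ar φ = ζ.zero A D ∧ φ = ζ.star A D

lemma disc_of_ker (ζ : Θ.StrongZero) (hRI : Θ.ReducedInterchange)
    {W N : B} {g0 : ζ.Z ⟶ W} {n : N ⟶ ζ.Z} {ν : Θ.H N W}
    (hk : Θ.IsStrongKer g0 n ν) : SnailDisc ζ N := by
  intro A φ
  have hg0 : g0 = ζ.isZero.to_ W := ζ.isZero.eq_of_src _ _
  have hstep1 : Θ.act (Θ.ar φ) ν (𝟙 W) = ζ.star A W := by
    rw [← hRI (Θ.ar φ) (n ≫ g0) φ ν rfl hk.ar_eq,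
      ← act_rr (𝟙 A) φ n g0, ζ.toZ_uniq A (Θ.act (𝟙 A) φ n), hg0]
    rfl
  have hzero : Θ.ar φ = ζ.zero A N := by
    apply ker_hom_ext hk.toIsKer
    · exact ζ.isZero.eq_of_tgt _ _
    · rw [hstep1, zero_act]
  refine ⟨hzero, ?_⟩
  have hcond : Θ.act (𝟙 A) (ζ.toZ A) g0 = Θ.act (ζ.zero A N) ν (𝟙 W) := by
    rw [zero_act, hg0]
    rfl
  obtain ⟨φ', ⟨h1', h2'⟩, huniq⟩ := hk.liftH (ζ.zero A N) (ζ.toZ A)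
      (ζ.isZero.eq_of_tgt _ _) hcond
  rw [huniq φ ⟨hzero, ζ.toZ_uniq A _⟩,
    huniq (ζ.star A N) ⟨ar_star ζ A N, ζ.toZ_uniq A _⟩]

lemma ker_pullback (ζ : Θ.StrongZero) [HasPullbacks B] {D D' : B}
    (hD' : SnailDisc ζ D') (h : D ⟶ D') :
    Θ.IsKer h (pullback.fst h (ζ.isZero.to_ D'))
      (ζ.star (pullback h (ζ.isZero.to_ D')) D') := by
  constructor
  · rw [ar_star, pullback.condition,
      show pullback.snd h (ζ.isZero.to_ D') = ζ.isZero.from_ _ from ζ.isZero.eq_of_tgt _ _]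
    rfl
  · intro A f φ hφ
    obtain ⟨hφ0, hφs⟩ := hD' A φ
    have hf0 : f ≫ h = ζ.isZero.from_ A ≫ ζ.isZero.to_ D' := by
      rw [← hφ, hφ0]
      rfl
    refine ⟨pullback.lift f (ζ.isZero.from_ A) hf0, ⟨pullback.lift_fst _ _ _, ?_⟩, ?_⟩
    · rw [act_star, hφs]
    · rintro y ⟨hy1, -⟩
      apply pullback.hom_ext
      · rw [hy1, pullback.lift_fst]
      · exact ζ.isZero.eq_of_tgt _ _

lemma snail_transfer (S : ∀ ⦃X Y : B⦄, (X ⟶ Y) → Prop)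
    (hS_comp : ∀ {X Y Z : B} (u : X ⟶ Y) (v : Y ⟶ Z), S u → S v → S (u ≫ v))
    (hS_id : ∀ X : B, S (𝟙 X))
    (hS_cancel : ∀ {X Y Z : B} (u : X ⟶ Y) (v : Y ⟶ Z), S (u ≫ v) → S v)
    {W X Y N₀ : B} {f : W ⟶ X} {φ : Θ.H W Y} {g : X ⟶ Y}
    {n₀ : N₀ ⟶ X} {ν₀ : Θ.H N₀ Y} (hk₀ : Θ.IsKer g n₀ ν₀)
    {w₀ : W ⟶ N₀} (hw₀1 : w₀ ≫ n₀ = f) (hw₀2 : Θ.act w₀ ν₀ (𝟙 Y) = φ)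
    (hSw₀ : S w₀) : SExact Θ S f φ g := by
  intro N n ν hk w hw1 hw2
  obtain ⟨i, ⟨hi1, hi2⟩, -⟩ := hk.lift n₀ ν₀ hk₀.ar_eq
  obtain ⟨j, ⟨hj1, hj2⟩, -⟩ := hk₀.lift n ν hk.ar_eq
  have hji : j ≫ i = 𝟙 N := by
    apply ker_hom_ext hk
    · rw [Category.assoc, hi1, hj1, Category.id_comp]
    · rw [← act_ll j i ν, hi2, hj2, Θ.act_id]
  have hSi : S i := hS_cancel j i (by rw [hji]; exact hS_id N)
  have hwi : w = w₀ ≫ i := by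
    apply ker_hom_ext hk
    · rw [hw1, Category.assoc, hi1, hw₀1]
    · rw [hw2, ← act_ll w₀ i ν, hi2, hw₀2]
  rw [hwi]
  exact hS_comp _ _ hSw₀ hSi

end SnailAux


/-- Exactness of the snail sequence at `N(0_X)`, `N(0_Y)` and `π₀(X)`.
Let `(B, Θ)` satisfy the reduced interchange condition, with a Θ-strong zero object `ζ`,
strong Θ-kernels of all arrows, strong Θ-cokernels of all terminal arrows, and pullbacks.
Let `S` be a class of arrows closed under composition, stable under pullbacks, containing
the identities and with the left cancellation property.  If `Y` and `N(g)` are S-proper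
and `X` is S-global, then the snail sequence of `g` is S-exact at `N(0_X)`, at `N(0_Y)`
and at `π₀(X)`. -/
theorem snail_sequence_S_exact
    {B : Type u} [Category.{v} B] [HasPullbacks B] (Θ : NullStruct B)
    (hRI : Θ.ReducedInterchange) (ζ : Θ.StrongZero)
    (hK : ∀ (X Y : B) (g : X ⟶ Y), ∃ (N : B) (n : N ⟶ X) (ν : Θ.H N Y), Θ.IsStrongKer g n ν)
    (hC : ∀ (Y : B), ∃ (Q : B) (c : ζ.Z ⟶ Q) (γ : Θ.H Y Q),
        Θ.IsStrongCoker (ζ.isZero.from_ Y) c γ)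
    -- the class `S` of arrows
    (S : ∀ ⦃X Y : B⦄, (X ⟶ Y) → Prop)
    (hS_comp : ∀ {X Y Z : B} (u : X ⟶ Y) (v : Y ⟶ Z), S u → S v → S (u ≫ v))
    (hS_pb : ∀ {P X Y Z : B} (fst : P ⟶ X) (snd : P ⟶ Y) (u : X ⟶ Z) (v : Y ⟶ Z),
        IsPullback fst snd u v → S v → S fst)
    (hS_id : ∀ X : B, S (𝟙 X))
    (hS_cancel : ∀ {X Y Z : B} (u : X ⟶ Y) (v : Y ⟶ Z), S (u ≫ v) → S v)
    -- the arrow `g` and its strong Θ-kernel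
    {X Y : B} (g : X ⟶ Y)
    {Ng : B} (ng : Ng ⟶ X) (νg : Θ.H Ng Y) (hg : Θ.IsStrongKer g ng νg)
    -- strong Θ-kernels of the initial arrows of `N(g)`, `X`, `Y`
    {KN : B} (kN : KN ⟶ ζ.Z) (νN : Θ.H KN Ng) (hkN : Θ.IsStrongKer (ζ.isZero.to_ Ng) kN νN)
    {KX : B} (kX : KX ⟶ ζ.Z) (νX : Θ.H KX X) (hkX : Θ.IsStrongKer (ζ.isZero.to_ X) kX νX)
    {KY : B} (kY : KY ⟶ ζ.Z) (νY : Θ.H KY Y) (hkY : Θ.IsStrongKer (ζ.isZero.to_ Y) kY νY)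
    -- `π₀`-data of `N(g)`, `X`, `Y`
    {CN : B} (cN : ζ.Z ⟶ CN) (γN : Θ.H Ng CN)
    (hcN : Θ.IsStrongCoker (ζ.isZero.from_ Ng) cN γN)
    {PN : B} (pN : PN ⟶ ζ.Z) (μN : Θ.H PN CN) (hpN : Θ.IsStrongKer cN pN μN)
    (ηN : Ng ⟶ PN) (hηN : Θ.act ηN μN (𝟙 CN) = γN)
    {CX : B} (cX : ζ.Z ⟶ CX) (γX : Θ.H X CX)
    (hcX : Θ.IsStrongCoker (ζ.isZero.from_ X) cX γX)
    {PX : B} (pX : PX ⟶ ζ.Z) (μX : Θ.H PX CX) (hpX : Θ.IsStrongKer cX pX μX)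
    (ηX : X ⟶ PX) (hηX : Θ.act ηX μX (𝟙 CX) = γX)
    {CY : B} (cY : ζ.Z ⟶ CY) (γY : Θ.H Y CY)
    (hcY : Θ.IsStrongCoker (ζ.isZero.from_ Y) cY γY)
    {PY : B} (pY : PY ⟶ ζ.Z) (μY : Θ.H PY CY) (hpY : Θ.IsStrongKer cY pY μY)
    (ηY : Y ⟶ PY) (hηY : Θ.act ηY μY (𝟙 CY) = γY)
    -- the arrows of the snail sequence
    (nng : KN ⟶ KX) (hnng₀ : nng ≫ kX = kN)
    (hnng : Θ.act nng νX (𝟙 X) = Θ.act (𝟙 KN) νN ng)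
    (nmg : KX ⟶ KY) (hnmg₀ : nmg ≫ kY = kX)
    (hnmg : Θ.act nmg νY (𝟙 Y) = Θ.act (𝟙 KX) νX g)
    (Δ : KY ⟶ Ng) (hΔ₀ : Δ ≫ ng = ζ.zero KY X) (hΔ : Θ.act Δ νg (𝟙 Y) = νY)
    (cng : CN ⟶ CX) (hcng₀ : cN ≫ cng = cX)
    (hcng : Θ.act (𝟙 Ng) γN cng = Θ.act ng γX (𝟙 CX))
    (png : PN ⟶ PX) (hpng₀ : png ≫ pX = pN)
    (hpng : Θ.act png μX (𝟙 CX) = Θ.act (𝟙 PN) μN cng)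
    (cg : CX ⟶ CY) (hcg₀ : cX ≫ cg = cY)
    (hcg : Θ.act (𝟙 X) γX cg = Θ.act g γY (𝟙 CY))
    (pg : PX ⟶ PY) (hpg₀ : pg ≫ pY = pX)
    (hpg : Θ.act pg μY (𝟙 CY) = Θ.act (𝟙 PX) μX cg)
    -- `Y` and `N(g)` are S-proper, `X` is S-global
    (hY_proper : SProper Θ S ηY) (hNg_proper : SProper Θ S ηN)
    (hX_global : S ηX) :
    SExact Θ S nng (ζ.star KN KY) nmg ∧
    SExact Θ S nmg (ζ.star KX PN) (Δ ≫ ηN) ∧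
    SExact Θ S png (ζ.star PN PY) pg := by
  classical
  have eqt : ∀ {A : B} (u v : A ⟶ ζ.Z), u = v := fun u v => ζ.isZero.eq_of_tgt u v
  have eqs : ∀ {A : B} (u v : ζ.Z ⟶ A), u = v := fun u v => ζ.isZero.eq_of_src u v
  have dKY : SnailDisc ζ KY := disc_of_ker ζ hRI hkY
  have dPN : SnailDisc ζ PN := disc_of_ker ζ hRI hpN
  have dPY : SnailDisc ζ PY := disc_of_ker ζ hRI hpY
  have harνN : Θ.ar νN = ζ.zero KN Ng := by
    rw [hkN.ar_eq, show kN = ζ.isZero.from_ KN from eqt _ _]; rfl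
  have harνX : Θ.ar νX = ζ.zero KX X := by
    rw [hkX.ar_eq, show kX = ζ.isZero.from_ KX from eqt _ _]; rfl
  have harμN : Θ.ar μN = ζ.zero PN CN := by
    rw [hpN.ar_eq, show pN = ζ.isZero.from_ PN from eqt _ _,
      show cN = ζ.isZero.to_ CN from eqs _ _]; rfl
  -- ============ Part 1 : exactness at N(0_X) ============
  have key1 : Θ.act (nng ≫ nmg) νY (𝟙 Y) = ζ.star KN Y := by
    calc Θ.act (nng ≫ nmg) νY (𝟙 Y)
        = Θ.act nng (Θ.act nmg νY (𝟙 Y)) (𝟙 Y) := (act_ll nng nmg νY).symm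
      _ = Θ.act nng (Θ.act (𝟙 KX) νX g) (𝟙 Y) := by rw [hnmg]
      _ = Θ.act nng νX g := act_lr nng νX g
      _ = Θ.act (𝟙 KN) (Θ.act nng νX (𝟙 X)) g := (act_rl nng νX g).symm
      _ = Θ.act (𝟙 KN) (Θ.act (𝟙 KN) νN ng) g := by rw [hnng]
      _ = Θ.act (𝟙 KN) νN (ng ≫ g) := act_rr (𝟙 KN) νN ng g
      _ = Θ.act (ζ.zero KN Ng) νg (𝟙 Y) := hRI _ _ νN νg harνN hg.ar_eq
      _ = ζ.star KN Y := zero_act ζ νg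
  have hcomp1 : nng ≫ nmg = ζ.zero KN KY :=
    ker_hom_ext hkY.toIsKer _ _ (eqt _ _) (by rw [key1, zero_act])
  have hker1 := ker_pullback ζ dKY nmg
  set P1 := pullback nmg (ζ.isZero.to_ KY) with hP1def
  obtain ⟨w₀, hw₀fst⟩ : ∃ w₀ : KN ⟶ P1, w₀ ≫ pullback.fst nmg (ζ.isZero.to_ KY) = nng :=
    ⟨pullback.lift nng (ζ.isZero.from_ KN)
      (by rw [hcomp1]; rfl : nng ≫ nmg = ζ.isZero.from_ KN ≫ ζ.isZero.to_ KY),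
      pullback.lift_fst _ _ _⟩
  have hfst1 : pullback.fst nmg (ζ.isZero.to_ KY) ≫ nmg = ζ.zero P1 KY := by
    rw [pullback.condition,
      show pullback.snd nmg (ζ.isZero.to_ KY) = ζ.isZero.from_ P1 from eqt _ _]; rfl
  have harψ : Θ.ar (Θ.act (pullback.fst nmg (ζ.isZero.to_ KY)) νX (𝟙 X))
      = ζ.zero P1 X := by
    rw [Θ.ar_act, Category.comp_id, harνX, comp_zero']
  have hψg : Θ.act (𝟙 P1) (Θ.act (pullback.fst nmg (ζ.isZero.to_ KY)) νX (𝟙 X)) g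
      = Θ.act (ζ.zero P1 Ng) νg (𝟙 Y) := by
    calc Θ.act (𝟙 P1) (Θ.act (pullback.fst nmg (ζ.isZero.to_ KY)) νX (𝟙 X)) g
        = Θ.act (pullback.fst nmg (ζ.isZero.to_ KY)) νX g := act_rl _ νX g
      _ = Θ.act (pullback.fst nmg (ζ.isZero.to_ KY)) (Θ.act (𝟙 KX) νX g) (𝟙 Y) :=
          (act_lr _ νX g).symm
      _ = Θ.act (pullback.fst nmg (ζ.isZero.to_ KY)) (Θ.act nmg νY (𝟙 Y)) (𝟙 Y) := by
          rw [hnmg]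
      _ = Θ.act (pullback.fst nmg (ζ.isZero.to_ KY) ≫ nmg) νY (𝟙 Y) := act_ll _ nmg νY
      _ = Θ.act (ζ.zero P1 KY) νY (𝟙 Y) := by rw [hfst1]
      _ = ζ.star P1 Y := zero_act ζ νY
      _ = Θ.act (ζ.zero P1 Ng) νg (𝟙 Y) := (zero_act ζ νg).symm
  obtain ⟨χ, ⟨hχ1, hχ2⟩, -⟩ := hg.liftH (ζ.zero P1 Ng)
      (Θ.act (pullback.fst nmg (ζ.isZero.to_ KY)) νX (𝟙 X))
      (by rw [harψ, zero_comp']) hψg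
  obtain ⟨v, ⟨hv1, hv2⟩, -⟩ := hkN.lift (ζ.isZero.from_ P1) χ hχ1
  have hvnng : v ≫ nng = pullback.fst nmg (ζ.isZero.to_ KY) := by
    apply ker_hom_ext hkX.toIsKer _ _ (eqt _ _)
    calc Θ.act (v ≫ nng) νX (𝟙 X)
        = Θ.act v (Θ.act nng νX (𝟙 X)) (𝟙 X) := (act_ll v nng νX).symm
      _ = Θ.act v (Θ.act (𝟙 KN) νN ng) (𝟙 X) := by rw [hnng]
      _ = Θ.act v νN ng := act_lr v νN ng
      _ = Θ.act (𝟙 P1) (Θ.act v νN (𝟙 Ng)) ng := (act_rl v νN ng).symm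
      _ = Θ.act (𝟙 P1) χ ng := by rw [hv2]
      _ = Θ.act (pullback.fst nmg (ζ.isZero.to_ KY)) νX (𝟙 X) := hχ2
  have hvw : v ≫ w₀ = 𝟙 P1 := by
    apply pullback.hom_ext
    · rw [Category.assoc, hw₀fst, hvnng, Category.id_comp]
    · exact eqt _ _
  have hSw₀ : S w₀ := hS_cancel v w₀ (by rw [hvw]; exact hS_id P1)
  have goal1 : SExact Θ S nng (ζ.star KN KY) nmg :=
    snail_transfer S hS_comp hS_id hS_cancel hker1 hw₀fst (act_star ζ w₀) hSw₀
  -- ============ Part 2 : exactness at N(0_Y) ============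
  obtain ⟨χX, ⟨hχX1, hχX2⟩, -⟩ := hg.liftH (nmg ≫ Δ) νX
      (by rw [harνX, Category.assoc, hΔ₀, comp_zero'])
      (by rw [← act_ll nmg Δ νg, hΔ, hnmg])
  have key2 : Θ.act (nmg ≫ Δ ≫ ηN) μN (𝟙 CN) = ζ.star KX CN := by
    calc Θ.act (nmg ≫ Δ ≫ ηN) μN (𝟙 CN)
        = Θ.act ((nmg ≫ Δ) ≫ ηN) μN (𝟙 CN) := by rw [Category.assoc]
      _ = Θ.act (nmg ≫ Δ) (Θ.act ηN μN (𝟙 CN)) (𝟙 CN) := (act_ll _ ηN μN).symm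
      _ = Θ.act (nmg ≫ Δ) γN (𝟙 CN) := by rw [hηN]
      _ = Θ.act (𝟙 KX) χX (ζ.isZero.from_ Ng ≫ cN) :=
          (hRI (nmg ≫ Δ) (ζ.isZero.from_ Ng ≫ cN) χX γN hχX1 hcN.ar_eq).symm
      _ = Θ.act (𝟙 KX) (Θ.act (𝟙 KX) χX (ζ.isZero.from_ Ng)) cN :=
          (act_rr (𝟙 KX) χX _ cN).symm
      _ = Θ.act (𝟙 KX) (ζ.toZ KX) cN := by
          rw [ζ.toZ_uniq KX (Θ.act (𝟙 KX) χX (ζ.isZero.from_ Ng))]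
      _ = ζ.star KX CN := by rw [show cN = ζ.isZero.to_ CN from eqs _ _]; rfl
  have hcomp2 : nmg ≫ Δ ≫ ηN = ζ.zero KX PN := by
    apply ker_hom_ext hpN.toIsKer _ _ (eqt _ _)
    rw [key2, zero_act]
  have hker2 := ker_pullback ζ dPN (Δ ≫ ηN)
  set P2 := pullback (Δ ≫ ηN) (ζ.isZero.to_ PN) with hP2def
  obtain ⟨w₁, hw₁fst⟩ : ∃ w₁ : KX ⟶ P2,
      w₁ ≫ pullback.fst (Δ ≫ ηN) (ζ.isZero.to_ PN) = nmg :=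
    ⟨pullback.lift nmg (ζ.isZero.from_ KX)
      (by rw [hcomp2]; rfl : nmg ≫ Δ ≫ ηN = ζ.isZero.from_ KX ≫ ζ.isZero.to_ PN),
      pullback.lift_fst _ _ _⟩
  have hfst2 : pullback.fst (Δ ≫ ηN) (ζ.isZero.to_ PN) ≫ Δ ≫ ηN = ζ.zero P2 PN := by
    rw [pullback.condition,
      show pullback.snd (Δ ≫ ηN) (ζ.isZero.to_ PN) = ζ.isZero.from_ P2 from eqt _ _]; rfl
  obtain ⟨NI, nI, νI, hkNI⟩ := hK Ng Ng (𝟙 Ng)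
  obtain ⟨NE, nE, νE, hkNE⟩ := hK Ng PN ηN
  obtain ⟨w, ⟨hwa, hwb⟩, -⟩ := hkNE.lift nI (Θ.act (𝟙 NI) νI ηN)
      (by rw [Θ.ar_act, hkNI.ar_eq]; simp)
  have hSw : S w := hNg_proper nI νI hkNI.toIsKer nE νE hkNE.toIsKer w hwa hwb
  obtain ⟨q, ⟨hqa, hqb⟩, -⟩ := hkNE.lift (pullback.fst (Δ ≫ ηN) (ζ.isZero.to_ PN) ≫ Δ)
      (ζ.star P2 PN)
      (by rw [ar_star, Category.assoc, hfst2])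
  set Q := pullback w q with hQdef
  have hSsndQ : S (pullback.snd w q) :=
    hS_pb (pullback.snd w q) (pullback.fst w q) q w (IsPullback.of_hasPullback w q).flip hSw
  have harφQ : Θ.ar (Θ.act (pullback.fst w q) νI (𝟙 Ng)) = pullback.fst w q ≫ nI := by
    rw [Θ.ar_act, hkNI.ar_eq]; simp
  have he : pullback.fst w q ≫ nI
      = (pullback.snd w q ≫ pullback.fst (Δ ≫ ηN) (ζ.isZero.to_ PN)) ≫ Δ := by
    rw [← hwa, ← Category.assoc, pullback.condition, Category.assoc, hqa, ← Category.assoc]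
  have harψ2 : Θ.ar (Θ.act (𝟙 Q) (Θ.act (pullback.fst w q) νI (𝟙 Ng)) ng)
      = ζ.zero Q X := by
    rw [Θ.ar_act, Category.id_comp, harφQ, he, Category.assoc, Category.assoc, hΔ₀,
      comp_zero', comp_zero']
  obtain ⟨s, ⟨hsa, hsb⟩, -⟩ := hkX.lift (ζ.isZero.from_ Q)
      (Θ.act (𝟙 Q) (Θ.act (pullback.fst w q) νI (𝟙 Ng)) ng) (by rw [harψ2]; rfl)
  have hsnmg : s ≫ nmg = pullback.snd w q ≫ pullback.fst (Δ ≫ ηN) (ζ.isZero.to_ PN) := by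
    apply ker_hom_ext hkY.toIsKer _ _ (eqt _ _)
    have lhs : Θ.act (s ≫ nmg) νY (𝟙 Y)
        = Θ.act (𝟙 Q) (Θ.act (𝟙 Q) (Θ.act (pullback.fst w q) νI (𝟙 Ng)) ng) g := by
      calc Θ.act (s ≫ nmg) νY (𝟙 Y)
          = Θ.act s (Θ.act nmg νY (𝟙 Y)) (𝟙 Y) := (act_ll s nmg νY).symm
        _ = Θ.act s (Θ.act (𝟙 KX) νX g) (𝟙 Y) := by rw [hnmg]
        _ = Θ.act s νX g := act_lr s νX g
        _ = Θ.act (𝟙 Q) (Θ.act s νX (𝟙 X)) g := (act_rl s νX g).symm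
        _ = Θ.act (𝟙 Q) (Θ.act (𝟙 Q) (Θ.act (pullback.fst w q) νI (𝟙 Ng)) ng) g := by
            rw [hsb]
    have rhs : Θ.act (pullback.snd w q ≫ pullback.fst (Δ ≫ ηN) (ζ.isZero.to_ PN)) νY (𝟙 Y)
        = Θ.act (𝟙 Q) (Θ.act (𝟙 Q) (Θ.act (pullback.fst w q) νI (𝟙 Ng)) ng) g := by
      calc Θ.act (pullback.snd w q ≫ pullback.fst (Δ ≫ ηN) (ζ.isZero.to_ PN)) νY (𝟙 Y)
          = Θ.act (pullback.snd w q ≫ pullback.fst (Δ ≫ ηN) (ζ.isZero.to_ PN))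
              (Θ.act Δ νg (𝟙 Y)) (𝟙 Y) := by rw [hΔ]
        _ = Θ.act ((pullback.snd w q ≫ pullback.fst (Δ ≫ ηN) (ζ.isZero.to_ PN)) ≫ Δ)
              νg (𝟙 Y) := act_ll _ Δ νg
        _ = Θ.act (pullback.fst w q ≫ nI) νg (𝟙 Y) := by rw [he]
        _ = Θ.act (𝟙 Q) (Θ.act (pullback.fst w q) νI (𝟙 Ng)) (ng ≫ g) :=
            (hRI (pullback.fst w q ≫ nI) (ng ≫ g)
              (Θ.act (pullback.fst w q) νI (𝟙 Ng)) νg harφQ hg.ar_eq).symm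
        _ = Θ.act (𝟙 Q) (Θ.act (𝟙 Q) (Θ.act (pullback.fst w q) νI (𝟙 Ng)) ng) g :=
            (act_rr (𝟙 Q) _ ng g).symm
    rw [lhs, rhs]
  have hsw₁ : s ≫ w₁ = pullback.snd w q := by
    apply pullback.hom_ext
    · rw [Category.assoc, hw₁fst, hsnmg]
    · exact eqt _ _
  have hSw₁ : S w₁ := hS_cancel s w₁ (by rw [hsw₁]; exact hSsndQ)
  have goal2 : SExact Θ S nmg (ζ.star KX PN) (Δ ≫ ηN) :=
    snail_transfer S hS_comp hS_id hS_cancel hker2 hw₁fst (act_star ζ w₁) hSw₁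
  -- ============ Part 3 : exactness at π₀(X) ============
  obtain ⟨β, ⟨hβ1, hβ2⟩, -⟩ := hcN.descH (cng ≫ cg) (ζ.fromZ CY) (eqs _ _) (by
    have hri := hRI (ng ≫ g) (ζ.isZero.from_ Y ≫ cY) νg γY hg.ar_eq hcY.ar_eq
    calc Θ.act (ζ.isZero.from_ Ng) (ζ.fromZ CY) (𝟙 CY)
        = ζ.star Ng CY := fromZ_act ζ _ _
      _ = Θ.act (𝟙 Ng) (ζ.toZ Ng) (ζ.isZero.to_ CY) := rfl
      _ = Θ.act (𝟙 Ng) (Θ.act (𝟙 Ng) νg (ζ.isZero.from_ Y)) cY := by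
          rw [ζ.toZ_uniq Ng (Θ.act (𝟙 Ng) νg (ζ.isZero.from_ Y)),
            show cY = ζ.isZero.to_ CY from eqs _ _]
      _ = Θ.act (𝟙 Ng) νg (ζ.isZero.from_ Y ≫ cY) := act_rr (𝟙 Ng) νg _ cY
      _ = Θ.act (ng ≫ g) γY (𝟙 CY) := hri
      _ = Θ.act ng (Θ.act g γY (𝟙 CY)) (𝟙 CY) := (act_ll ng g γY).symm
      _ = Θ.act ng (Θ.act (𝟙 X) γX cg) (𝟙 CY) := by rw [hcg]
      _ = Θ.act ng γX cg := act_lr ng γX cg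
      _ = Θ.act (𝟙 Ng) (Θ.act ng γX (𝟙 CX)) cg := (act_rl ng γX cg).symm
      _ = Θ.act (𝟙 Ng) (Θ.act (𝟙 Ng) γN cng) cg := by rw [hcng]
      _ = Θ.act (𝟙 Ng) γN (cng ≫ cg) := act_rr (𝟙 Ng) γN cng cg)
  have hcomp3 : png ≫ pg = ζ.zero PN PY := by
    apply ker_hom_ext hpY.toIsKer _ _ (eqt _ _)
    calc Θ.act (png ≫ pg) μY (𝟙 CY)
        = Θ.act png (Θ.act pg μY (𝟙 CY)) (𝟙 CY) := (act_ll png pg μY).symm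
      _ = Θ.act png (Θ.act (𝟙 PX) μX cg) (𝟙 CY) := by rw [hpg]
      _ = Θ.act png μX cg := act_lr png μX cg
      _ = Θ.act (𝟙 PN) (Θ.act png μX (𝟙 CX)) cg := (act_rl png μX cg).symm
      _ = Θ.act (𝟙 PN) (Θ.act (𝟙 PN) μN cng) cg := by rw [hpng]
      _ = Θ.act (𝟙 PN) μN (cng ≫ cg) := act_rr (𝟙 PN) μN cng cg
      _ = Θ.act (𝟙 PN) μN (Θ.ar β) := by rw [hβ1]
      _ = Θ.act (ζ.zero PN CN) β (𝟙 CY) := hRI _ _ μN β harμN rfl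
      _ = ζ.star PN CY := zero_act ζ β
      _ = Θ.act (ζ.zero PN PY) μY (𝟙 CY) := (zero_act ζ μY).symm
  have hsq1 : ηN ≫ png = ng ≫ ηX := by
    apply ker_hom_ext hpX.toIsKer _ _ (eqt _ _)
    calc Θ.act (ηN ≫ png) μX (𝟙 CX)
        = Θ.act ηN (Θ.act png μX (𝟙 CX)) (𝟙 CX) := (act_ll ηN png μX).symm
      _ = Θ.act ηN (Θ.act (𝟙 PN) μN cng) (𝟙 CX) := by rw [hpng]
      _ = Θ.act ηN μN cng := act_lr ηN μN cng
      _ = Θ.act (𝟙 Ng) (Θ.act ηN μN (𝟙 CN)) cng := (act_rl ηN μN cng).symm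
      _ = Θ.act (𝟙 Ng) γN cng := by rw [hηN]
      _ = Θ.act ng γX (𝟙 CX) := hcng
      _ = Θ.act ng (Θ.act ηX μX (𝟙 CX)) (𝟙 CX) := by rw [hηX]
      _ = Θ.act (ng ≫ ηX) μX (𝟙 CX) := act_ll ng ηX μX
  have hsq2 : ηX ≫ pg = g ≫ ηY := by
    apply ker_hom_ext hpY.toIsKer _ _ (eqt _ _)
    calc Θ.act (ηX ≫ pg) μY (𝟙 CY)
        = Θ.act ηX (Θ.act pg μY (𝟙 CY)) (𝟙 CY) := (act_ll ηX pg μY).symm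
      _ = Θ.act ηX (Θ.act (𝟙 PX) μX cg) (𝟙 CY) := by rw [hpg]
      _ = Θ.act ηX μX cg := act_lr ηX μX cg
      _ = Θ.act (𝟙 X) (Θ.act ηX μX (𝟙 CX)) cg := (act_rl ηX μX cg).symm
      _ = Θ.act (𝟙 X) γX cg := by rw [hηX]
      _ = Θ.act g γY (𝟙 CY) := hcg
      _ = Θ.act g (Θ.act ηY μY (𝟙 CY)) (𝟙 CY) := by rw [hηY]
      _ = Θ.act (g ≫ ηY) μY (𝟙 CY) := act_ll g ηY μY
  have hker3 := ker_pullback ζ dPY pg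
  set P3 := pullback pg (ζ.isZero.to_ PY) with hP3def
  obtain ⟨w₂, hw₂fst⟩ : ∃ w₂ : PN ⟶ P3,
      w₂ ≫ pullback.fst pg (ζ.isZero.to_ PY) = png :=
    ⟨pullback.lift png (ζ.isZero.from_ PN)
      (by rw [hcomp3]; rfl : png ≫ pg = ζ.isZero.from_ PN ≫ ζ.isZero.to_ PY),
      pullback.lift_fst _ _ _⟩
  have hfst3 : pullback.fst pg (ζ.isZero.to_ PY) ≫ pg = ζ.zero P3 PY := by
    rw [pullback.condition,
      show pullback.snd pg (ζ.isZero.to_ PY) = ζ.isZero.from_ P3 from eqt _ _]; rfl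
  set Q1 := pullback (pullback.fst pg (ζ.isZero.to_ PY)) ηX with hQ1def
  have hSfstQ1 : S (pullback.fst (pullback.fst pg (ζ.isZero.to_ PY)) ηX) :=
    hS_pb _ (pullback.snd (pullback.fst pg (ζ.isZero.to_ PY)) ηX)
      (pullback.fst pg (ζ.isZero.to_ PY)) ηX (IsPullback.of_hasPullback _ _) hX_global
  obtain ⟨MI, mI, ξI, hkMI⟩ := hK Y Y (𝟙 Y)
  obtain ⟨ME, mE, ξE, hkME⟩ := hK Y PY ηY
  obtain ⟨wY, ⟨hwYa, hwYb⟩, -⟩ := hkME.lift mI (Θ.act (𝟙 MI) ξI ηY)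
      (by rw [Θ.ar_act, hkMI.ar_eq]; simp)
  have hSwY : S wY := hY_proper mI ξI hkMI.toIsKer mE ξE hkME.toIsKer wY hwYa hwYb
  have hq1comp : (pullback.snd (pullback.fst pg (ζ.isZero.to_ PY)) ηX ≫ g) ≫ ηY
      = ζ.zero Q1 PY := by
    rw [Category.assoc, ← hsq2, ← Category.assoc, ← pullback.condition, Category.assoc,
      hfst3, comp_zero']
  obtain ⟨qY, ⟨hqYa, hqYb⟩, -⟩ := hkME.lift
      (pullback.snd (pullback.fst pg (ζ.isZero.to_ PY)) ηX ≫ g) (ζ.star Q1 PY)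
      (by rw [ar_star, hq1comp])
  set Q2 := pullback qY wY with hQ2def
  have hSfstQ2 : S (pullback.fst qY wY) :=
    hS_pb _ (pullback.snd qY wY) qY wY (IsPullback.of_hasPullback _ _) hSwY
  have harθ : Θ.ar (Θ.act (pullback.snd qY wY) ξI (𝟙 Y))
      = (pullback.fst qY wY ≫ pullback.snd (pullback.fst pg (ζ.isZero.to_ PY)) ηX) ≫ g := by
    rw [Θ.ar_act, hkMI.ar_eq, Category.comp_id, Category.comp_id]
    calc pullback.snd qY wY ≫ mI
        = pullback.snd qY wY ≫ wY ≫ mE := by rw [hwYa]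
      _ = (pullback.fst qY wY ≫ qY) ≫ mE := by
          rw [← Category.assoc, ← pullback.condition]
      _ = pullback.fst qY wY
          ≫ pullback.snd (pullback.fst pg (ζ.isZero.to_ PY)) ηX ≫ g := by
          rw [Category.assoc, hqYa]
      _ = _ := by rw [← Category.assoc]
  obtain ⟨u, ⟨hu1, -⟩, -⟩ := hg.lift
      (pullback.fst qY wY ≫ pullback.snd (pullback.fst pg (ζ.isZero.to_ PY)) ηX)
      (Θ.act (pullback.snd qY wY) ξI (𝟙 Y)) harθ
  have hmw : (u ≫ ηN) ≫ w₂
      = pullback.fst qY wY ≫ pullback.fst (pullback.fst pg (ζ.isZero.to_ PY)) ηX := by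
    apply pullback.hom_ext
    · rw [Category.assoc, Category.assoc, hw₂fst]
      calc u ≫ ηN ≫ png
          = u ≫ ng ≫ ηX := by rw [hsq1]
        _ = (u ≫ ng) ≫ ηX := by rw [← Category.assoc]
        _ = (pullback.fst qY wY
            ≫ pullback.snd (pullback.fst pg (ζ.isZero.to_ PY)) ηX) ≫ ηX := by rw [hu1]
        _ = pullback.fst qY wY
            ≫ (pullback.fst (pullback.fst pg (ζ.isZero.to_ PY)) ηX
              ≫ pullback.fst pg (ζ.isZero.to_ PY)) := by
            rw [Category.assoc, ← pullback.condition]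
        _ = (pullback.fst qY wY
            ≫ pullback.fst (pullback.fst pg (ζ.isZero.to_ PY)) ηX)
            ≫ pullback.fst pg (ζ.isZero.to_ PY) := by rw [← Category.assoc]
    · exact eqt _ _
  have hSw₂ : S w₂ := hS_cancel (u ≫ ηN) w₂
    (by rw [hmw]; exact hS_comp _ _ hSfstQ2 hSfstQ1)
  have goal3 : SExact Θ S png (ζ.star PN PY) pg :=
    snail_transfer S hS_comp hS_id hS_cancel hker3 hw₂fst (act_star ζ w₂) hSw₂
  exact ⟨goal1, goal2, goal3⟩
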